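/- (Σ¹₁-immunity basis theorem) For every compact set 𝒞 ⊆ ω^ω with no non-empty Σ¹₁ subset, and every non-empty Σ¹₁ set 𝒟 ⊆ ω^ω, there is some X ∈ 𝒟 such that 𝒞 has no non-empty Σ¹₁(X) subset. -/

import Mathlib

namespace Paper

/-- Partial recursiveness relative to an oracle `O : ℕ → ℕ`:
the usual inductive definition of `Nat.Partrec` with an extra constructor for the oracle. -/
inductive RecursiveIn (O : ℕ → ℕ) : (ℕ →. ℕ) → Prop
  | zero : RecursiveIn O (pure 0)
  | succ : RecursiveIn O Nat.succ
  | left : RecursiveIn O ↑fun n : ℕ => n.unpair.1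
  | right : RecursiveIn O ↑fun n : ℕ => n.unpair.2
  | oracle : RecursiveIn O ↑O
  | pair {f g} : RecursiveIn O f → RecursiveIn O g →
      RecursiveIn O fun n => Nat.pair <$> f n <*> g n
  | comp {f g} : RecursiveIn O f → RecursiveIn O g →
      RecursiveIn O fun n => g n >>= f
  | prec {f g} : RecursiveIn O f → RecursiveIn O g →
      RecursiveIn O (Nat.unpaired fun a n =>
        n.rec (f a) fun y IH => do let i ← IH; g (Nat.pair a (Nat.pair y i)))
  | rfind {f} : RecursiveIn O f →
      RecursiveIn O fun a => Nat.rfind fun n => (fun m => m = 0) <$> f (Nat.pair a n)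

/-- `f : α →. σ` is partial recursive in the oracle `O`. -/
def PartrecIn (O : ℕ → ℕ) {α σ : Type} [Primcodable α] [Primcodable σ] (f : α →. σ) : Prop :=
  RecursiveIn O fun n =>
    Part.bind (Encodable.decode (α := α) n) fun a => (f a).map Encodable.encode

/-- `f : α → σ` is computable in the oracle `O`. -/
def ComputableIn (O : ℕ → ℕ) {α σ : Type} [Primcodable α] [Primcodable σ] (f : α → σ) : Prop :=
  PartrecIn O (f : α →. σ)

/-- The characteristic function of a set of naturals, used as an oracle. -/
noncomputable def setOracle (X : Set ℕ) : ℕ → ℕ := by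
  classical exact fun n => if n ∈ X then 1 else 0

/-- The initial segment `X↾n` of an element of Baire space, as a finite sequence. -/
def initSeg (X : ℕ → ℕ) (n : ℕ) : List ℕ := List.ofFn fun i : Fin n => X i

/-- `D ⊆ ω^ω` is a `O`-computably bounded `Π⁰₁(O)` class: `D = [T]` for an `O`-computable
tree `T ⊆ ω^{<ω}` whose nodes are bounded by an `O`-computable function. -/
def IsCBPi01In (O : ℕ → ℕ) (D : Set (ℕ → ℕ)) : Prop :=
  ∃ T : List ℕ → Bool,
    ComputableIn O T ∧
    (∀ σ τ : List ℕ, τ <+: σ → T σ = true → T τ = true) ∧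
    (∃ b : ℕ → ℕ, ComputableIn O b ∧
      ∀ σ : List ℕ, T σ = true → ∀ i : Fin σ.length, σ.get i ≤ b i.val) ∧
    D = {X | ∀ n : ℕ, T (initSeg X n) = true}

/-- `C ⊆ ω^ω` is `Π⁰₁` encodable: every infinite `X ⊆ ω` has an infinite subset `Y`
such that `C` admits a non-empty `Y`-computably bounded `Π⁰₁(Y)` subset. -/
def Pi01Encodable (C : Set (ℕ → ℕ)) : Prop :=
  ∀ X : Set ℕ, X.Infinite →
    ∃ Y : Set ℕ, Y ⊆ X ∧ Y.Infinite ∧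
      ∃ D : Set (ℕ → ℕ), D.Nonempty ∧ D ⊆ C ∧ IsCBPi01In (setOracle Y) D

/-- `f` is a `Π⁰₁` modulus of `C`: for every `g ≥ f`, `C` has a non-empty
`g`-computably bounded `Π⁰₁(g)` subset. -/
def IsPi01Modulus (f : ℕ → ℕ) (C : Set (ℕ → ℕ)) : Prop :=
  ∀ g : ℕ → ℕ, (∀ n, f n ≤ g n) →
    ∃ D : Set (ℕ → ℕ), D.Nonempty ∧ D ⊆ C ∧ IsCBPi01In g D

/-- `D ⊆ ω^ω` is `Σ¹₁(O)`. -/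
def IsSigma11In (O : ℕ → ℕ) (D : Set (ℕ → ℕ)) : Prop :=
  ∃ R : List ℕ × List ℕ × ℕ → Bool,
    ComputableIn O R ∧
    D = {X | ∃ Y : ℕ → ℕ, ∀ z : ℕ, R (initSeg X z, initSeg Y z, z) = true}

/-- `D ⊆ ω^ω` is `Σ¹₁`. -/
def IsSigma11 (D : Set (ℕ → ℕ)) : Prop :=
  ∃ R : List ℕ × List ℕ × ℕ → Bool,
    Computable R ∧
    D = {X | ∃ Y : ℕ → ℕ, ∀ z : ℕ, R (initSeg X z, initSeg Y z, z) = true}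

/-- `A ∈ ω^ω` is computably encodable. -/
def ComputablyEncodable (A : ℕ → ℕ) : Prop :=
  ∀ X : Set ℕ, X.Infinite →
    ∃ Y : Set ℕ, Y ⊆ X ∧ Y.Infinite ∧ ComputableIn (setOracle Y) A

/-- `f` is a modulus of `A`: every `g ≥ f` computes `A`. -/
def IsModulus (f : ℕ → ℕ) (A : ℕ → ℕ) : Prop :=
  ∀ g : ℕ → ℕ, (∀ n, f n ≤ g n) → ComputableIn g A

/-- The cylinder `[σ]` of elements of Baire space extending `σ`. -/
def cyl (σ : List ℕ) : Set (ℕ → ℕ) := {X | initSeg X σ.length = σ}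



-- ===== auxiliary machinery =====

open Nat.Partrec (Code)
open Nat.Partrec.Code
open Encodable

theorem initSeg_length (X : ℕ → ℕ) (n : ℕ) : (initSeg X n).length = n := by
  simp [initSeg]

theorem initSeg_getElem? (X : ℕ → ℕ) (n j : ℕ) :
    (initSeg X n)[j]? = if j < n then some (X j) else none := by
  split
  · rename_i h
    rw [List.getElem?_eq_getElem (by simpa [initSeg] using h)]
    simp [initSeg]
  · rename_i h
    exact List.getElem?_eq_none (by simpa [initSeg] using Nat.le_of_not_lt h)

theorem initSeg_get? (X : ℕ → ℕ) (n j : ℕ) :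
    (initSeg X n)[j]? = if j < n then some (X j) else none := by
  rw [initSeg_getElem?]

theorem initSeg_getD (X : ℕ → ℕ) {n j : ℕ} (h : j < n) :
    (initSeg X n).getD j 0 = X j := by
  simp [List.getD, initSeg_getElem?, h]

theorem initSeg_eq_iff {X Y : ℕ → ℕ} {n : ℕ} :
    initSeg X n = initSeg Y n ↔ ∀ j < n, X j = Y j := by
  constructor
  · intro h j hj
    have := congrArg (fun l => l[j]?) h
    simpa [initSeg_getElem?, hj] using this
  · intro h
    apply List.ext_getElem? fun j => ?_
    rw [initSeg_getElem?, initSeg_getElem?]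
    split
    · rename_i hj; rw [h j hj]
    · rfl

def row (W : ℕ → ℕ) (i : ℕ) : ℕ → ℕ := fun k => W (Nat.pair i k)


/-- `F` is a monotone finite-use approximation of `f` along the oracle `O`. -/
def Good (O : ℕ → ℕ) (f : ℕ →. ℕ) (F : List ℕ × ℕ →. ℕ) : Prop :=
  (∀ k k' n v, k ≤ k' → v ∈ F (initSeg O k, n) → v ∈ F (initSeg O k', n)) ∧
  (∀ k n v, v ∈ F (initSeg O k, n) → v ∈ f n) ∧
  (∀ n v, v ∈ f n → ∃ k, v ∈ F (initSeg O k, n))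

section PrecAux

variable {O : ℕ → ℕ} {f g : ℕ →. ℕ} {F G : List ℕ × ℕ →. ℕ}

private def FR (O : ℕ → ℕ) (F G : List ℕ × ℕ →. ℕ) (a k m : ℕ) : Part ℕ :=
  Nat.rec (F (initSeg O k, a))
    (fun y IH => IH.bind fun i => G (initSeg O k, Nat.pair a (Nat.pair y i))) m

private def TR (f g : ℕ →. ℕ) (a m : ℕ) : Part ℕ :=
  Nat.rec (f a) (fun y IH => IH.bind fun i => g (Nat.pair a (Nat.pair y i))) m

private theorem FR_zero {a k : ℕ} : FR O F G a k 0 = F (initSeg O k, a) := rfl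
private theorem FR_succ {a k m : ℕ} :
    FR O F G a k (m + 1) = (FR O F G a k m).bind
      fun i => G (initSeg O k, Nat.pair a (Nat.pair m i)) := rfl
private theorem TR_zero {a : ℕ} : TR f g a 0 = f a := rfl
private theorem TR_succ {a m : ℕ} :
    TR f g a (m + 1) = (TR f g a m).bind fun i => g (Nat.pair a (Nat.pair m i)) := rfl

private theorem prec_aux
    (Fm : ∀ k k' n v, k ≤ k' → v ∈ F (initSeg O k, n) → v ∈ F (initSeg O k', n))
    (Fs : ∀ k n v, v ∈ F (initSeg O k, n) → v ∈ f n)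
    (Fc : ∀ n v, v ∈ f n → ∃ k, v ∈ F (initSeg O k, n))
    (Gm : ∀ k k' n v, k ≤ k' → v ∈ G (initSeg O k, n) → v ∈ G (initSeg O k', n))
    (Gs : ∀ k n v, v ∈ G (initSeg O k, n) → v ∈ g n)
    (Gc : ∀ n v, v ∈ g n → ∃ k, v ∈ G (initSeg O k, n)) :
    ∀ a m,
      (∀ k k' v, k ≤ k' → v ∈ FR O F G a k m → v ∈ FR O F G a k' m) ∧
      (∀ k v, v ∈ FR O F G a k m → v ∈ TR f g a m) ∧
      (∀ v, v ∈ TR f g a m → ∃ k, v ∈ FR O F G a k m) := by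
  intro a m
  induction m with
  | zero =>
      exact ⟨fun k k' v hkk hv => Fm _ _ _ _ hkk hv,
             fun k v hv => Fs _ _ _ hv, fun v hv => Fc _ _ hv⟩
  | succ m ih =>
      obtain ⟨ihm, ihs, ihc⟩ := ih
      refine ⟨?_, ?_, ?_⟩
      · intro k k' v hkk hv
        rw [FR_succ, Part.mem_bind_iff] at hv ⊢
        obtain ⟨i, hi, hv⟩ := hv
        exact ⟨i, ihm _ _ _ hkk hi, Gm _ _ _ _ hkk hv⟩
      · intro k v hv
        rw [FR_succ, Part.mem_bind_iff] at hv
        rw [TR_succ, Part.mem_bind_iff]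
        obtain ⟨i, hi, hv⟩ := hv
        exact ⟨i, ihs _ _ hi, Gs _ _ _ hv⟩
      · intro v hv
        rw [TR_succ, Part.mem_bind_iff] at hv
        obtain ⟨i, hi, hv⟩ := hv
        obtain ⟨k₁, hk₁⟩ := ihc _ hi
        obtain ⟨k₂, hk₂⟩ := Gc _ _ hv
        refine ⟨max k₁ k₂, ?_⟩
        rw [FR_succ, Part.mem_bind_iff]
        exact ⟨i, ihm _ _ _ (le_max_left _ _) hk₁, Gm _ _ _ _ (le_max_right _ _) hk₂⟩

end PrecAux

theorem recursiveIn_good {O : ℕ → ℕ} {f : ℕ →. ℕ} (h : RecursiveIn O f) :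
    ∃ F : List ℕ × ℕ →. ℕ, Partrec F ∧ Good O f F := by
  induction h with
  | zero =>
      refine ⟨fun _ => Part.some 0, Partrec.const' _, ?_, ?_, ?_⟩
      · intro _ _ _ v _ hv; exact hv
      · intro _ n v hv; exact hv
      · intro n v hv; exact ⟨0, hv⟩
  | succ =>
      refine ⟨fun p => Part.some (Nat.succ p.2),
        (Computable.succ.comp Computable.snd).partrec, ?_, ?_, ?_⟩
      · intro _ _ _ v _ hv; exact hv
      · intro _ n v hv; simpa [PFun.coe_val] using hv
      · intro n v hv; exact ⟨0, by simpa [PFun.coe_val] using hv⟩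
  | left =>
      refine ⟨fun p => Part.some p.2.unpair.1,
        ((Primrec.fst.comp Primrec.unpair).to_comp.comp Computable.snd).partrec, ?_, ?_, ?_⟩
      · intro _ _ _ v _ hv; exact hv
      · intro _ n v hv; simpa [PFun.coe_val] using hv
      · intro n v hv; exact ⟨0, by simpa [PFun.coe_val] using hv⟩
  | right =>
      refine ⟨fun p => Part.some p.2.unpair.2,
        ((Primrec.snd.comp Primrec.unpair).to_comp.comp Computable.snd).partrec, ?_, ?_, ?_⟩
      · intro _ _ _ v _ hv; exact hv
      · intro _ n v hv; simpa [PFun.coe_val] using hv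
      · intro n v hv; exact ⟨0, by simpa [PFun.coe_val] using hv⟩
  | oracle =>
      refine ⟨fun p => (p.1[p.2]? : Option ℕ),
        Computable.ofOption (Computable.list_getElem?.comp Computable.fst Computable.snd), ?_, ?_, ?_⟩
      · intro k k' n v hkk hv
        have hv' : (initSeg O k)[n]? = some v := by
          simpa [Part.mem_ofOption, Option.mem_def] using hv
        rw [initSeg_get?] at hv'
        by_cases h : n < k
        · simp only [h, if_pos, Option.some_inj] at hv'
          have hnk' : n < k' := Nat.lt_of_lt_of_le h hkk
          have : (initSeg O k')[n]? = some v := by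
            rw [initSeg_get?, if_pos hnk', hv']
          simpa [Part.mem_ofOption, Option.mem_def] using this
        · simp [h] at hv'
      · intro k n v hv
        have hv' : (initSeg O k)[n]? = some v := by
          simpa [Part.mem_ofOption, Option.mem_def] using hv
        rw [initSeg_get?] at hv'
        by_cases h : n < k
        · simp only [h, if_pos, Option.some_inj] at hv'
          simp [PFun.coe_val, hv'.symm]
        · simp [h] at hv'
      · intro n v hv
        refine ⟨n + 1, ?_⟩
        have hv' : v = O n := by simpa [PFun.coe_val] using hv
        have : (initSeg O (n + 1))[n]? = some v := by
          rw [initSeg_get?, if_pos (Nat.lt_succ_self n), hv']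
        simpa [Part.mem_ofOption, Option.mem_def] using this
  | pair hf hg ihf ihg =>
      obtain ⟨F, pF, Fm, Fs, Fc⟩ := ihf
      obtain ⟨G, pG, Gm, Gs, Gc⟩ := ihg
      have hmem : ∀ (x y : Part ℕ) (v : ℕ),
          (v ∈ Nat.pair <$> x <*> y ↔ ∃ a ∈ x, ∃ b ∈ y, v = Nat.pair a b) := by
        intro x y v
        simp [Seq.seq, Part.map_eq_map, Part.bind_eq_bind, Part.mem_bind_iff, Part.mem_map_iff]
        tauto
      refine ⟨fun p => (F p).bind fun a => (G p).map (Nat.pair a), ?_, ?_, ?_, ?_⟩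
      · exact pF.bind ((pG.comp Computable.fst).map
          ((Primrec₂.natPair.comp (Primrec.snd.comp Primrec.fst) Primrec.snd).to_comp).to₂).to₂
      · intro k k' n v hkk hv
        simp only [Part.mem_bind_iff, Part.mem_map_iff] at hv ⊢
        obtain ⟨a, ha, b, hb, rfl⟩ := hv
        exact ⟨a, Fm _ _ _ _ hkk ha, b, Gm _ _ _ _ hkk hb, rfl⟩
      · intro k n v hv
        simp only [Part.mem_bind_iff, Part.mem_map_iff] at hv
        obtain ⟨a, ha, b, hb, rfl⟩ := hv
        exact (hmem _ _ _).2 ⟨a, Fs _ _ _ ha, b, Gs _ _ _ hb, rfl⟩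
      · intro n v hv
        obtain ⟨a, ha, b, hb, rfl⟩ := (hmem _ _ _).1 hv
        obtain ⟨k₁, hk₁⟩ := Fc _ _ ha
        obtain ⟨k₂, hk₂⟩ := Gc _ _ hb
        refine ⟨max k₁ k₂, ?_⟩
        simp only [Part.mem_bind_iff, Part.mem_map_iff]
        exact ⟨a, Fm _ _ _ _ (le_max_left _ _) hk₁, b, Gm _ _ _ _ (le_max_right _ _) hk₂, rfl⟩
  | comp hf hg ihf ihg =>
      obtain ⟨F, pF, Fm, Fs, Fc⟩ := ihf
      obtain ⟨G, pG, Gm, Gs, Gc⟩ := ihg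
      refine ⟨fun p => (G p).bind fun y => F (p.1, y), ?_, ?_, ?_, ?_⟩
      · exact pG.bind (pF.comp ((Computable.fst.comp Computable.fst).pair Computable.snd)).to₂
      · intro k k' n v hkk hv
        simp only [Part.mem_bind_iff] at hv ⊢
        obtain ⟨y, hy, hv⟩ := hv
        exact ⟨y, Gm _ _ _ _ hkk hy, Fm _ _ _ _ hkk hv⟩
      · intro k n v hv
        simp only [Part.mem_bind_iff] at hv
        simp only [Part.bind_eq_bind, Part.mem_bind_iff]
        obtain ⟨y, hy, hv⟩ := hv
        exact Part.mem_bind_iff.2 ⟨y, Gs _ _ _ hy, Fs _ _ _ hv⟩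
      · intro n v hv
        replace hv := Part.mem_bind_iff.1 hv
        obtain ⟨y, hy, hv⟩ := hv
        obtain ⟨k₁, hk₁⟩ := Gc _ _ hy
        obtain ⟨k₂, hk₂⟩ := Fc _ _ hv
        refine ⟨max k₁ k₂, ?_⟩
        simp only [Part.mem_bind_iff]
        exact ⟨y, Gm _ _ _ _ (le_max_left _ _) hk₁, Fm _ _ _ _ (le_max_right _ _) hk₂⟩
  | prec hf hg ihf ihg =>
      obtain ⟨F, pF, Fm, Fs, Fc⟩ := ihf
      obtain ⟨G, pG, Gm, Gs, Gc⟩ := ihg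
      have main := prec_aux Fm Fs Fc Gm Gs Gc
      refine ⟨fun p => Nat.rec (motive := fun _ => Part ℕ) (F (p.1, p.2.unpair.1))
        (fun y IH => IH.bind fun i => G (p.1, Nat.pair p.2.unpair.1 (Nat.pair y i)))
        p.2.unpair.2, ?_, ?_, ?_, ?_⟩
      · have hnum : Computable fun p : List ℕ × ℕ => p.2.unpair.2 :=
          (Primrec.snd.comp (Primrec.unpair.comp Primrec.snd)).to_comp
        have hbase : Partrec fun p : List ℕ × ℕ => F (p.1, p.2.unpair.1) :=
          pF.comp (Computable.fst.pair
            ((Primrec.fst.comp (Primrec.unpair.comp Primrec.snd)).to_comp))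
        have hstep : Partrec₂ fun (p : List ℕ × ℕ) (yi : ℕ × ℕ) =>
            G (p.1, Nat.pair p.2.unpair.1 (Nat.pair yi.1 yi.2)) := by
          have hc : Computable fun q : (List ℕ × ℕ) × ℕ × ℕ =>
              ((q.1.1, Nat.pair q.1.2.unpair.1 (Nat.pair q.2.1 q.2.2)) : List ℕ × ℕ) :=
            (Computable.fst.comp Computable.fst).pair
            ((Primrec₂.natPair.comp
              (Primrec.fst.comp (Primrec.unpair.comp (Primrec.snd.comp Primrec.fst)))
              (Primrec₂.natPair.comp (Primrec.fst.comp Primrec.snd)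
                (Primrec.snd.comp Primrec.snd))).to_comp)
          exact (pG.comp hc).to₂
        exact (Partrec.nat_rec hnum hbase hstep).of_eq fun p => rfl
      · intro k k' n v hkk hv
        exact (main n.unpair.1 n.unpair.2).1 k k' v hkk hv
      · intro k n v hv
        exact (main n.unpair.1 n.unpair.2).2.1 k v hv
      · intro n v hv
        obtain ⟨k, hk⟩ := (main n.unpair.1 n.unpair.2).2.2 v hv
        exact ⟨k, hk⟩
  | rfind hf ihf =>
      obtain ⟨F, pF, Fm, Fs, Fc⟩ := ihf
      refine ⟨fun p => Nat.rfind fun m => (fun v => v = 0) <$> F (p.1, Nat.pair p.2 m),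
        ?_, ?_, ?_, ?_⟩
      · refine Partrec.rfind ?_
        refine Partrec.map (pF.comp (((Computable.fst.comp Computable.fst)).pair
          ((Primrec₂.natPair.comp (Primrec.snd.comp Primrec.fst) Primrec.snd).to_comp))) ?_
        exact ((Primrec.eq.comp Primrec.snd (Primrec.const 0)).decide.to_comp).to₂
      · intro k k' n v hkk hv
        replace hv := Nat.mem_rfind.1 hv; apply Nat.mem_rfind.2
        obtain ⟨h1, h2⟩ := hv
        constructor
        · simp only [Part.map_eq_map, Part.mem_map_iff] at h1 ⊢
          obtain ⟨a, ha, e⟩ := h1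
          exact ⟨a, Fm _ _ _ _ hkk ha, e⟩
        · intro m hm
          have := h2 hm
          simp only [Part.map_eq_map, Part.mem_map_iff] at this ⊢
          obtain ⟨a, ha, e⟩ := this
          exact ⟨a, Fm _ _ _ _ hkk ha, e⟩
      · intro k n v hv
        replace hv := Nat.mem_rfind.1 hv; apply Nat.mem_rfind.2
        obtain ⟨h1, h2⟩ := hv
        constructor
        · simp only [Part.map_eq_map, Part.mem_map_iff] at h1 ⊢
          obtain ⟨a, ha, e⟩ := h1
          exact ⟨a, Fs _ _ _ ha, e⟩
        · intro m hm
          have := h2 hm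
          simp only [Part.map_eq_map, Part.mem_map_iff] at this ⊢
          obtain ⟨a, ha, e⟩ := this
          exact ⟨a, Fs _ _ _ ha, e⟩
      · intro n v hv
        replace hv := Nat.mem_rfind.1 hv
        obtain ⟨h1, h2⟩ := hv
        have uk : ∀ m : ℕ, (∀ i < m, ∃ k, (false : Bool) ∈
              (fun v => decide (v = 0)) <$> F (initSeg O k, Nat.pair n i)) →
            ∃ k, ∀ i < m, (false : Bool) ∈ (fun v => decide (v = 0)) <$> F (initSeg O k, Nat.pair n i) := by
          intro m
          induction m with
          | zero => intro _; exact ⟨0, fun i hi => absurd hi (Nat.not_lt_zero i)⟩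
          | succ m ih =>
              intro hall
              obtain ⟨k₁, hk₁⟩ := ih fun i hi => hall i (Nat.lt_succ_of_lt hi)
              obtain ⟨k₂, hk₂⟩ := hall m (Nat.lt_succ_self m)
              refine ⟨max k₁ k₂, fun i hi => ?_⟩
              rcases Nat.lt_succ_iff_lt_or_eq.1 hi with hi | rfl
              · simp only [Part.map_eq_map, Part.mem_map_iff] at hk₁ ⊢
                obtain ⟨a, ha, e⟩ := hk₁ i hi
                exact ⟨a, Fm _ _ _ _ (le_max_left _ _) ha, e⟩
              · simp only [Part.map_eq_map, Part.mem_map_iff] at hk₂ ⊢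
                obtain ⟨a, ha, e⟩ := hk₂
                exact ⟨a, Fm _ _ _ _ (le_max_right _ _) ha, e⟩
        have hfin : ∀ i < v, ∃ k, (false : Bool) ∈
            (fun v => decide (v = 0)) <$> F (initSeg O k, Nat.pair n i) := by
          intro i hi
          have := h2 hi
          simp only [Part.map_eq_map, Part.mem_map_iff] at this ⊢
          obtain ⟨a, ha, e⟩ := this
          obtain ⟨k, hk⟩ := Fc _ _ ha
          exact ⟨k, a, hk, e⟩
        obtain ⟨k₁, hk₁⟩ := uk v hfin
        simp only [Part.map_eq_map, Part.mem_map_iff] at h1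
        obtain ⟨a, ha, e⟩ := h1
        obtain ⟨k₂, hk₂⟩ := Fc _ _ ha
        refine ⟨max k₁ k₂, ?_⟩
        apply Nat.mem_rfind.2
        constructor
        · simp only [Part.map_eq_map, Part.mem_map_iff]
          exact ⟨a, Fm _ _ _ _ (le_max_right _ _) hk₂, e⟩
        · intro m hm
          simp only [Part.map_eq_map, Part.mem_map_iff] at hk₁ ⊢
          obtain ⟨b, hb, e'⟩ := hk₁ m hm
          exact ⟨b, Fm _ _ _ _ (le_max_left _ _) hb, e'⟩


theorem computable_code {α : Type} [Primcodable α] {R : α → Bool} (h : Computable R) :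
    ∃ c : Code, ∀ p : α, eval c (encode p) = Part.some (encode (R p)) := by
  obtain ⟨c, hc⟩ := exists_code.1 h
  refine ⟨c, fun p => ?_⟩
  have := congrFun hc (encode p)
  rw [this]
  simp [encodek, PFun.coe_val]

theorem good_code {O : ℕ → ℕ} {f : ℕ →. ℕ} {F : List ℕ × ℕ →. ℕ}
    (pF : Partrec F) (G : Good O f F) :
    ∃ c : Code,
      (∀ k n v, v ∈ eval c (encode ((initSeg O k, n) : List ℕ × ℕ)) → v ∈ f n) ∧
      (∀ n v, v ∈ f n → ∃ k, v ∈ eval c (encode ((initSeg O k, n) : List ℕ × ℕ))) := by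
  obtain ⟨c, hc⟩ := exists_code.1 pF
  have key : ∀ (σ : List ℕ) (n v : ℕ),
      v ∈ eval c (encode ((σ, n) : List ℕ × ℕ)) ↔ v ∈ F (σ, n) := by
    intro σ n v
    rw [congrFun hc (encode ((σ, n) : List ℕ × ℕ))]
    simp [encodek]
  exact ⟨c, fun k n v hv => G.2.1 k n v ((key _ _ _).1 hv),
    fun n v hv => (G.2.2 n v hv).imp fun k h => (key _ _ _).2 h⟩

/-- `c` is an oracle-code computing the total relation `R` along the oracle `X`. -/
def Tracks (c : Code) (X : ℕ → ℕ) (R : List ℕ × List ℕ × ℕ → Bool) : Prop :=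
  (∀ (p : List ℕ × List ℕ × ℕ) (k v),
      v ∈ eval c (encode ((initSeg X k, encode p) : List ℕ × ℕ)) → v = encode (R p)) ∧
  (∀ p : List ℕ × List ℕ × ℕ, ∃ k s,
      evaln s c (encode ((initSeg X k, encode p) : List ℕ × ℕ)) = some (encode (R p)))

theorem computableIn_tracks {X : ℕ → ℕ} {R : List ℕ × List ℕ × ℕ → Bool}
    (h : ComputableIn X R) : ∃ c, Tracks c X R := by
  obtain ⟨F, pF, G⟩ := recursiveIn_good h
  obtain ⟨c, hs, hc⟩ := good_code pF G
  have hfval : ∀ p : List ℕ × List ℕ × ℕ,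
      ((↑(Encodable.decode (α := List ℕ × List ℕ × ℕ) (encode p)) : Part _).bind
        fun a => Part.map encode ((R : List ℕ × List ℕ × ℕ →. Bool) a))
      = Part.some (encode (R p)) := by
    intro p
    rw [Encodable.encodek]
    simp [PFun.coe_val]
  refine ⟨c, fun p k v hv => ?_, fun p => ?_⟩
  · have := hs k (encode p) v hv
    rw [hfval p] at this
    simpa using this
  · obtain ⟨k, hk⟩ := hc (encode p) (encode (R p)) (by rw [hfval p]; simp)
    obtain ⟨s, hsn⟩ := evaln_complete.1 hk
    exact ⟨k, s, hsn⟩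

/-- membership-with-witnesses in the set defined by oracle-code `c` along `X`. -/
def ApxMem (c : Code) (X Z Y H : ℕ → ℕ) : Prop :=
  ∀ z, evaln (H z).unpair.1 c
      (encode ((initSeg X (H z).unpair.2,
        encode ((initSeg Z z, initSeg Y z, z) : List ℕ × List ℕ × ℕ)) : List ℕ × ℕ))
    = some (encode true)

theorem apx_sound {c : Code} {X R Z Y H} (ht : Tracks c X R) (h : ApxMem c X Z Y H) :
    ∀ z, R (initSeg Z z, initSeg Y z, z) = true := by
  intro z
  have h2 : encode true ∈ eval c
      (encode ((initSeg X (H z).unpair.2,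
        encode ((initSeg Z z, initSeg Y z, z) : List ℕ × List ℕ × ℕ)) : List ℕ × ℕ)) :=
    evaln_sound (by rw [h z]; rfl)
  have := ht.1 _ _ _ h2
  exact (encode_inj.1 this.symm)

theorem apx_complete {c : Code} {X R Z Y} (ht : Tracks c X R)
    (h : ∀ z, R (initSeg Z z, initSeg Y z, z) = true) : ∃ H, ApxMem c X Z Y H := by
  have : ∀ z, ∃ sk : ℕ, evaln sk.unpair.1 c
      (encode ((initSeg X sk.unpair.2,
        encode ((initSeg Z z, initSeg Y z, z) : List ℕ × List ℕ × ℕ)) : List ℕ × ℕ))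
      = some (encode true) := by
    intro z
    obtain ⟨k, s, hks⟩ := ht.2 (initSeg Z z, initSeg Y z, z)
    refine ⟨Nat.pair s k, ?_⟩
    rw [Nat.unpair_pair]
    rw [hks, h z]
  choose H hH using this
  exact ⟨H, hH⟩


inductive Atom
  | base : Atom
  | plant (c : Code) (a : ℕ) : Atom
  | fpfx (j v : ℕ) : Atom

def AtomSat (c₀ : Code) : Atom → (ℕ → ℕ) → Prop
  | .base, W => ∀ z, evaln (row W 2 z) c₀
      (encode ((initSeg (row W 0) z, initSeg (row W 1) z, z) : List ℕ × List ℕ × ℕ))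
      = some (encode true)
  | .plant c a, W => ApxMem c (row W 0) (row W a) (row W (a + 1)) (row W (a + 2))
  | .fpfx j v, W => W j = v

def asupp : Atom → ℕ
  | .base => 3
  | .plant _ a => a + 3
  | .fpfx j _ => (Nat.unpair j).1 + 1

def SatL (c₀ : Code) (L : List Atom) (W : ℕ → ℕ) : Prop := ∀ a ∈ L, AtomSat c₀ a W

def ASet (c₀ : Code) (L : List Atom) (c : Code) : Set (ℕ → ℕ) :=
  {Z | ∃ W Y H, SatL c₀ L W ∧ ApxMem c (row W 0) Z Y H}

theorem atomSat_ext {c₀ : Code} {a : Atom} {W W' : ℕ → ℕ}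
    (hr : ∀ j, (Nat.unpair j).1 < asupp a → W' j = W j)
    (h : AtomSat c₀ a W) : AtomSat c₀ a W' := by
  have e : ∀ i, i < asupp a → row W' i = row W i := fun i hi =>
    funext fun k => hr _ (by rw [Nat.unpair_pair]; exact hi)
  cases a with
  | base =>
      have e0 := e 0 (by simp [asupp])
      have e1 := e 1 (by simp [asupp])
      have e2 := e 2 (by simp [asupp])
      simpa [AtomSat, e0, e1, e2] using h
  | plant c a =>
      have e0 := e 0 (by simp only [asupp]; omega)
      have ea := e a (by simp only [asupp]; omega)
      have ea1 := e (a + 1) (by simp only [asupp]; omega)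
      have ea2 := e (a + 2) (by simp only [asupp]; omega)
      simpa [AtomSat, e0, ea, ea1, ea2] using h
  | fpfx j v =>
      have := hr j (by simp [asupp])
      simpa [AtomSat, this] using h

-- ===== list extraction helpers =====

def pval (l : List ℕ) (j : ℕ) : ℕ := l.getD j 0

theorem pval_initSeg {V : ℕ → ℕ} {z j : ℕ} (h : j < z) : pval (initSeg V z) j = V j :=
  initSeg_getD V h

def sub1 (l : List ℕ) (i m : ℕ) : List ℕ :=
  (List.range m).map fun k => pval l (Nat.pair i k)

def sub2 (l : List ℕ) (i m : ℕ) : List ℕ :=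
  (List.range m).map fun k => pval l (Nat.pair 0 (Nat.pair i k))

def tk (l : List ℕ) (m : ℕ) : List ℕ := (List.range m).map fun k => pval l k

theorem map_range_eq_initSeg {f g : ℕ → ℕ} {m : ℕ} (h : ∀ k < m, f k = g k) :
    (List.range m).map f = initSeg g m := by
  apply List.ext_getElem?
  intro j
  rw [initSeg_getElem?]
  by_cases hj : j < m
  · rw [List.getElem?_map, List.getElem?_range hj]
    simp [hj, h j hj]
  · rw [List.getElem?_eq_none (by simpa using Nat.le_of_not_lt hj), if_neg hj]

theorem sub1_initSeg {V : ℕ → ℕ} {z i m : ℕ} (h : Nat.pair i m ≤ z) :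
    sub1 (initSeg V z) i m = initSeg (row V i) m :=
  map_range_eq_initSeg fun k hk =>
    pval_initSeg (lt_of_lt_of_le (Nat.pair_lt_pair_right i hk) h)

theorem sub2_initSeg {V : ℕ → ℕ} {z i m : ℕ} (h : Nat.pair 0 (Nat.pair i m) ≤ z) :
    sub2 (initSeg V z) i m = initSeg (row (row V 0) i) m :=
  map_range_eq_initSeg fun k hk =>
    pval_initSeg (lt_of_lt_of_le
      (Nat.pair_lt_pair_right 0 (Nat.pair_lt_pair_right i hk)) h)

theorem tk_initSeg {V : ℕ → ℕ} {z m : ℕ} (h : m ≤ z) :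
    tk (initSeg V z) m = initSeg V m :=
  map_range_eq_initSeg fun k hk => pval_initSeg (lt_of_lt_of_le hk h)

-- ===== checks =====

def bcheck (c₀ : Code) (l : List ℕ) (z : ℕ) : Bool :=
  if Nat.pair 0 (Nat.pair 2 z.unpair.1) < l.length ∧
      Nat.pair 0 (Nat.pair 0 z.unpair.1) ≤ l.length ∧
      Nat.pair 0 (Nat.pair 1 z.unpair.1) ≤ l.length then
    decide (evaln (pval l (Nat.pair 0 (Nat.pair 2 z.unpair.1))) c₀
      (encode ((sub2 l 0 z.unpair.1, sub2 l 1 z.unpair.1, z.unpair.1) :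
        List ℕ × List ℕ × ℕ)) = some (encode true))
  else true

def pcheck (c : Code) (a : ℕ) (l : List ℕ) (z : ℕ) : Bool :=
  if Nat.pair 0 (Nat.pair (a + 2) z.unpair.1) < l.length ∧
      Nat.pair 0 (Nat.pair 0 (pval l (Nat.pair 0 (Nat.pair (a + 2) z.unpair.1))).unpair.2) ≤ l.length ∧
      Nat.pair 0 (Nat.pair a z.unpair.1) ≤ l.length ∧
      Nat.pair 0 (Nat.pair (a + 1) z.unpair.1) ≤ l.length then
    decide (evaln (pval l (Nat.pair 0 (Nat.pair (a + 2) z.unpair.1))).unpair.1 c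
      (encode ((sub2 l 0 (pval l (Nat.pair 0 (Nat.pair (a + 2) z.unpair.1))).unpair.2,
        encode ((sub2 l a z.unpair.1, sub2 l (a + 1) z.unpair.1, z.unpair.1) :
          List ℕ × List ℕ × ℕ)) : List ℕ × ℕ)) = some (encode true))
  else true

def fcheck (j v : ℕ) (l : List ℕ) : Bool :=
  if Nat.pair 0 j < l.length then decide (pval l (Nat.pair 0 j) = v) else true

def acheck (c₀ : Code) : Atom → List ℕ → ℕ → Bool
  | .base => bcheck c₀
  | .plant c a => pcheck c a
  | .fpfx j v => fun l _ => fcheck j v l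

def tcheck (c : Code) (lZ l : List ℕ) (z : ℕ) : Bool :=
  if Nat.pair 2 z.unpair.1 < l.length ∧
      Nat.pair 0 (Nat.pair 0 (pval l (Nat.pair 2 z.unpair.1)).unpair.2) ≤ l.length ∧
      z.unpair.1 ≤ lZ.length ∧ Nat.pair 1 z.unpair.1 ≤ l.length then
    decide (evaln (pval l (Nat.pair 2 z.unpair.1)).unpair.1 c
      (encode ((sub2 l 0 (pval l (Nat.pair 2 z.unpair.1)).unpair.2,
        encode ((tk lZ z.unpair.1, sub1 l 1 z.unpair.1, z.unpair.1) :
          List ℕ × List ℕ × ℕ)) : List ℕ × ℕ)) = some (encode true))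
  else true

def MTop (c₀ : Code) (L : List Atom) (c : Code) : List ℕ × List ℕ × ℕ → Bool :=
  fun q => (L.all fun a => acheck c₀ a q.2.1 q.2.2) && tcheck c q.1 q.2.1 q.2.2

-- ===== checks are sound for actual initial segments =====

theorem acheck_true {c₀ : Code} {a : Atom} {V : ℕ → ℕ} (z : ℕ)
    (h : AtomSat c₀ a (row V 0)) : acheck c₀ a (initSeg V z) z = true := by
  cases a with
  | base =>
      rw [acheck, bcheck]
      split
      · rename_i hg
        rw [initSeg_length] at hg
        obtain ⟨h2, h0, h1⟩ := hg
        rw [pval_initSeg h2, sub2_initSeg h0, sub2_initSeg h1]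
        have := h z.unpair.1
        rw [decide_eq_true_eq]
        exact this
      · rfl
  | plant c a =>
      rw [acheck, pcheck]
      split
      · rename_i hg
        rw [initSeg_length] at hg
        obtain ⟨h2, h0, ha, ha1⟩ := hg
        rw [pval_initSeg h2] at h0 ⊢
        rw [sub2_initSeg h0, sub2_initSeg ha, sub2_initSeg ha1]
        have := h z.unpair.1
        rw [decide_eq_true_eq]
        exact this
      · rfl
  | fpfx j v =>
      show fcheck j v (initSeg V z) = true
      rw [fcheck]
      split
      · rename_i hg
        rw [initSeg_length] at hg
        rw [pval_initSeg hg, decide_eq_true_eq]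
        exact h
      · rfl

theorem tcheck_true {c : Code} {V Z : ℕ → ℕ} (z : ℕ)
    (h : ApxMem c (row (row V 0) 0) Z (row V 1) (row V 2)) :
    tcheck c (initSeg Z z) (initSeg V z) z = true := by
  rw [tcheck]
  split
  · rename_i hg
    rw [initSeg_length, initSeg_length] at hg
    obtain ⟨h2, h0, hz, h1⟩ := hg
    rw [pval_initSeg h2] at h0 ⊢
    rw [sub2_initSeg h0, sub1_initSeg h1, tk_initSeg hz]
    have := h z.unpair.1
    rw [decide_eq_true_eq]
    exact this
  · rfl

-- ===== checks are complete =====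

theorem sat_of_acheck {c₀ : Code} {a : Atom} {V : ℕ → ℕ}
    (h : ∀ z, acheck c₀ a (initSeg V z) z = true) : AtomSat c₀ a (row V 0) := by
  cases a with
  | base =>
      intro z'
      set B := Nat.pair 0 (Nat.pair 2 z') + Nat.pair 0 (Nat.pair 0 z') +
          Nat.pair 0 (Nat.pair 1 z') + 1 with hB
      have hBle : B ≤ Nat.pair z' B := Nat.right_le_pair z' B
      have hz := h (Nat.pair z' B)
      rw [acheck, bcheck] at hz
      simp only [Nat.unpair_pair, initSeg_length] at hz
      have hg : Nat.pair 0 (Nat.pair 2 z') < Nat.pair z' B ∧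
          Nat.pair 0 (Nat.pair 0 z') ≤ Nat.pair z' B ∧
          Nat.pair 0 (Nat.pair 1 z') ≤ Nat.pair z' B := by omega
      rw [if_pos hg, decide_eq_true_eq] at hz
      rw [pval_initSeg hg.1, sub2_initSeg hg.2.1, sub2_initSeg hg.2.2] at hz
      exact hz
  | plant c a =>
      intro z'
      set k := (V (Nat.pair 0 (Nat.pair (a + 2) z'))).unpair.2 with hk
      set B := Nat.pair 0 (Nat.pair (a + 2) z') + Nat.pair 0 (Nat.pair 0 k) +
          Nat.pair 0 (Nat.pair a z') + Nat.pair 0 (Nat.pair (a + 1) z') + 1 with hB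
      have hBle : B ≤ Nat.pair z' B := Nat.right_le_pair z' B
      have hz := h (Nat.pair z' B)
      rw [acheck, pcheck] at hz
      simp only [Nat.unpair_pair, initSeg_length] at hz
      have hread : Nat.pair 0 (Nat.pair (a + 2) z') < Nat.pair z' B := by omega
      rw [pval_initSeg hread] at hz
      have hg : Nat.pair 0 (Nat.pair (a + 2) z') < Nat.pair z' B ∧
          Nat.pair 0 (Nat.pair 0 (V (Nat.pair 0 (Nat.pair (a + 2) z'))).unpair.2) ≤
            Nat.pair z' B ∧
          Nat.pair 0 (Nat.pair a z') ≤ Nat.pair z' B ∧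
          Nat.pair 0 (Nat.pair (a + 1) z') ≤ Nat.pair z' B := by
        refine ⟨hread, ?_, by omega, by omega⟩
        rw [← hk]; omega
      rw [if_pos hg, decide_eq_true_eq] at hz
      rw [sub2_initSeg hg.2.1, sub2_initSeg hg.2.2.1, sub2_initSeg hg.2.2.2] at hz
      exact hz
  | fpfx j v =>
      have hz := h (Nat.pair 0 (Nat.pair 0 j + 1))
      have hz' : fcheck j v (initSeg V (Nat.pair 0 (Nat.pair 0 j + 1))) = true := hz
      rw [fcheck] at hz'
      have hg : Nat.pair 0 j < (initSeg V (Nat.pair 0 (Nat.pair 0 j + 1))).length := by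
        rw [initSeg_length]
        exact lt_of_lt_of_le (Nat.lt_succ_self _) (Nat.right_le_pair _ _)
      rw [if_pos hg, decide_eq_true_eq, pval_initSeg (by rwa [initSeg_length] at hg)] at hz'
      exact hz'

theorem sat_of_tcheck {c : Code} {V Z : ℕ → ℕ}
    (h : ∀ z, tcheck c (initSeg Z z) (initSeg V z) z = true) :
    ApxMem c (row (row V 0) 0) Z (row V 1) (row V 2) := by
  intro z'
  set k := (V (Nat.pair 2 z')).unpair.2 with hk
  set B := Nat.pair 2 z' + Nat.pair 0 (Nat.pair 0 k) + z' + Nat.pair 1 z' + 1 with hB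
  have hBle : B ≤ Nat.pair z' B := Nat.right_le_pair z' B
  have hz := h (Nat.pair z' B)
  rw [tcheck] at hz
  simp only [Nat.unpair_pair, initSeg_length] at hz
  have hread : Nat.pair 2 z' < Nat.pair z' B := by omega
  rw [pval_initSeg hread] at hz
  have hg : Nat.pair 2 z' < Nat.pair z' B ∧
      Nat.pair 0 (Nat.pair 0 (V (Nat.pair 2 z')).unpair.2) ≤ Nat.pair z' B ∧
      z' ≤ Nat.pair z' B ∧ Nat.pair 1 z' ≤ Nat.pair z' B := by
    refine ⟨hread, ?_, by omega, by omega⟩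
    rw [← hk]; omega
  rw [if_pos hg, decide_eq_true_eq] at hz
  rw [sub2_initSeg hg.2.1, sub1_initSeg hg.2.2.2, tk_initSeg hg.2.2.1] at hz
  exact hz


-- ===== set equality =====

def tripleV (W Y H : ℕ → ℕ) : ℕ → ℕ := fun j =>
  if (Nat.unpair j).1 = 0 then W (Nat.unpair j).2
  else if (Nat.unpair j).1 = 1 then Y (Nat.unpair j).2
  else if (Nat.unpair j).1 = 2 then H (Nat.unpair j).2 else 0

theorem row_tripleV₀ (W Y H : ℕ → ℕ) : row (tripleV W Y H) 0 = W :=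
  funext fun k => by simp [row, tripleV, Nat.unpair_pair]

theorem row_tripleV₁ (W Y H : ℕ → ℕ) : row (tripleV W Y H) 1 = Y :=
  funext fun k => by simp [row, tripleV, Nat.unpair_pair]

theorem row_tripleV₂ (W Y H : ℕ → ℕ) : row (tripleV W Y H) 2 = H :=
  funext fun k => by simp [row, tripleV, Nat.unpair_pair]

theorem aset_eq (c₀ : Code) (L : List Atom) (c : Code) :
    ASet c₀ L c = {Z | ∃ Y', ∀ z, MTop c₀ L c (initSeg Z z, initSeg Y' z, z) = true} := by
  have key : ∀ (Z Y' : ℕ → ℕ) (z : ℕ),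
      MTop c₀ L c (initSeg Z z, initSeg Y' z, z) = true ↔
        ((L.all fun a => acheck c₀ a (initSeg Y' z) z) = true ∧
          tcheck c (initSeg Z z) (initSeg Y' z) z = true) := by
    intro Z Y' z
    show ((L.all fun a => acheck c₀ a (initSeg Y' z) z) &&
      tcheck c (initSeg Z z) (initSeg Y' z) z) = true ↔ _
    rw [Bool.and_eq_true]
  ext Z
  constructor
  · rintro ⟨W, Y, H, hS, hA⟩
    refine ⟨tripleV W Y H, fun z => ?_⟩
    rw [key]
    constructor
    · rw [List.all_eq_true]
      intro a ha
      exact acheck_true z (by rw [row_tripleV₀]; exact hS a ha)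
    · refine tcheck_true z ?_
      rw [row_tripleV₀, row_tripleV₁, row_tripleV₂]
      exact hA
  · rintro ⟨Y', hM⟩
    refine ⟨row Y' 0, row Y' 1, row Y' 2, fun a ha => ?_, ?_⟩
    · refine sat_of_acheck (V := Y') fun z => ?_
      exact List.all_eq_true.1 ((key Z Y' z).1 (hM z)).1 a ha
    · exact sat_of_tcheck fun z => ((key Z Y' z).1 (hM z)).2

-- ===== computability =====

theorem primrec_pval : Primrec₂ pval := Primrec.list_getD 0

theorem primrec_sub2 (i : ℕ) : Primrec₂ fun l m => sub2 l i m := by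
  have hg : Primrec₂ fun (p : List ℕ × ℕ) (k : ℕ) => pval p.1 (Nat.pair 0 (Nat.pair i k)) :=
    primrec_pval.comp (Primrec.fst.comp Primrec.fst)
      (Primrec₂.natPair.comp (Primrec.const 0)
        (Primrec₂.natPair.comp (Primrec.const i) Primrec.snd))
  exact (Primrec.list_map (Primrec.list_range.comp Primrec.snd) hg).to₂

theorem primrec_sub1 (i : ℕ) : Primrec₂ fun l m => sub1 l i m := by
  have hg : Primrec₂ fun (p : List ℕ × ℕ) (k : ℕ) => pval p.1 (Nat.pair i k) :=
    primrec_pval.comp (Primrec.fst.comp Primrec.fst)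
      (Primrec₂.natPair.comp (Primrec.const i) Primrec.snd)
  exact (Primrec.list_map (Primrec.list_range.comp Primrec.snd) hg).to₂

theorem primrec_tk : Primrec₂ tk := by
  have hg : Primrec₂ fun (p : List ℕ × ℕ) (k : ℕ) => pval p.1 k :=
    primrec_pval.comp (Primrec.fst.comp Primrec.fst) Primrec.snd
  exact (Primrec.list_map (Primrec.list_range.comp Primrec.snd) hg).to₂

private theorem hz1 : Primrec fun p : List ℕ × ℕ => p.2.unpair.1 :=
  Primrec.fst.comp (Primrec.unpair.comp Primrec.snd)

private theorem hlen : Primrec fun p : List ℕ × ℕ => p.1.length :=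
  Primrec.list_length.comp Primrec.fst

private theorem hpos (i : ℕ) : Primrec fun p : List ℕ × ℕ => Nat.pair 0 (Nat.pair i p.2.unpair.1) :=
  Primrec₂.natPair.comp (Primrec.const 0) (Primrec₂.natPair.comp (Primrec.const i) hz1)

theorem primrec_bcheck (c₀ : Code) : Primrec₂ (bcheck c₀) := by
  have hguard : PrimrecPred fun p : List ℕ × ℕ =>
      Nat.pair 0 (Nat.pair 2 p.2.unpair.1) < p.1.length ∧
      Nat.pair 0 (Nat.pair 0 p.2.unpair.1) ≤ p.1.length ∧
      Nat.pair 0 (Nat.pair 1 p.2.unpair.1) ≤ p.1.length :=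
    (Primrec.nat_lt.comp (hpos 2) hlen).and
      ((Primrec.nat_le.comp (hpos 0) hlen).and (Primrec.nat_le.comp (hpos 1) hlen))
  have hs : Primrec fun p : List ℕ × ℕ => pval p.1 (Nat.pair 0 (Nat.pair 2 p.2.unpair.1)) :=
    primrec_pval.comp Primrec.fst (hpos 2)
  have harg : Primrec fun p : List ℕ × ℕ =>
      encode ((sub2 p.1 0 p.2.unpair.1, sub2 p.1 1 p.2.unpair.1, p.2.unpair.1) :
        List ℕ × List ℕ × ℕ) :=
    Primrec.encode.comp (((primrec_sub2 0).comp Primrec.fst hz1).pair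
      (((primrec_sub2 1).comp Primrec.fst hz1).pair hz1))
  have hev : Primrec fun p : List ℕ × ℕ =>
      evaln (pval p.1 (Nat.pair 0 (Nat.pair 2 p.2.unpair.1))) c₀
        (encode ((sub2 p.1 0 p.2.unpair.1, sub2 p.1 1 p.2.unpair.1, p.2.unpair.1) :
          List ℕ × List ℕ × ℕ)) :=
    primrec_evaln.comp ((hs.pair (Primrec.const c₀)).pair harg)
  have hbody : Primrec fun p : List ℕ × ℕ => decide (evaln (pval p.1 (Nat.pair 0 (Nat.pair 2 p.2.unpair.1))) c₀
        (encode ((sub2 p.1 0 p.2.unpair.1, sub2 p.1 1 p.2.unpair.1, p.2.unpair.1) :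
          List ℕ × List ℕ × ℕ)) = some (encode true)) :=
    (Primrec.eq.comp hev (Primrec.const (some (encode true)))).decide
  exact (Primrec.ite hguard hbody (Primrec.const true)).to₂

theorem primrec_pcheck (c : Code) (a : ℕ) : Primrec₂ (pcheck c a) := by
  have hsk : Primrec fun p : List ℕ × ℕ => pval p.1 (Nat.pair 0 (Nat.pair (a + 2) p.2.unpair.1)) :=
    primrec_pval.comp Primrec.fst (hpos (a + 2))
  have hKpos : Primrec fun p : List ℕ × ℕ =>
      Nat.pair 0 (Nat.pair 0 (pval p.1 (Nat.pair 0 (Nat.pair (a + 2) p.2.unpair.1))).unpair.2) :=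
    Primrec₂.natPair.comp (Primrec.const 0)
      (Primrec₂.natPair.comp (Primrec.const 0) (Primrec.snd.comp (Primrec.unpair.comp hsk)))
  have hguard : PrimrecPred fun p : List ℕ × ℕ =>
      Nat.pair 0 (Nat.pair (a + 2) p.2.unpair.1) < p.1.length ∧
      Nat.pair 0 (Nat.pair 0 (pval p.1 (Nat.pair 0 (Nat.pair (a + 2) p.2.unpair.1))).unpair.2) ≤ p.1.length ∧
      Nat.pair 0 (Nat.pair a p.2.unpair.1) ≤ p.1.length ∧
      Nat.pair 0 (Nat.pair (a + 1) p.2.unpair.1) ≤ p.1.length :=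
    (Primrec.nat_lt.comp (hpos (a + 2)) hlen).and
      ((Primrec.nat_le.comp hKpos hlen).and
        ((Primrec.nat_le.comp (hpos a) hlen).and (Primrec.nat_le.comp (hpos (a + 1)) hlen)))
  have hinner : Primrec fun p : List ℕ × ℕ =>
      encode ((sub2 p.1 a p.2.unpair.1, sub2 p.1 (a + 1) p.2.unpair.1, p.2.unpair.1) :
        List ℕ × List ℕ × ℕ) :=
    Primrec.encode.comp (((primrec_sub2 a).comp Primrec.fst hz1).pair
      (((primrec_sub2 (a + 1)).comp Primrec.fst hz1).pair hz1))
  have harg : Primrec fun p : List ℕ × ℕ =>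
      encode ((sub2 p.1 0 (pval p.1 (Nat.pair 0 (Nat.pair (a + 2) p.2.unpair.1))).unpair.2,
        encode ((sub2 p.1 a p.2.unpair.1, sub2 p.1 (a + 1) p.2.unpair.1, p.2.unpair.1) :
          List ℕ × List ℕ × ℕ)) : List ℕ × ℕ) :=
    Primrec.encode.comp (((primrec_sub2 0).comp Primrec.fst
      (Primrec.snd.comp (Primrec.unpair.comp hsk))).pair hinner)
  have hev : Primrec fun p : List ℕ × ℕ =>
      evaln (pval p.1 (Nat.pair 0 (Nat.pair (a + 2) p.2.unpair.1))).unpair.1 c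
        (encode ((sub2 p.1 0 (pval p.1 (Nat.pair 0 (Nat.pair (a + 2) p.2.unpair.1))).unpair.2,
          encode ((sub2 p.1 a p.2.unpair.1, sub2 p.1 (a + 1) p.2.unpair.1, p.2.unpair.1) :
            List ℕ × List ℕ × ℕ)) : List ℕ × ℕ)) :=
    primrec_evaln.comp ((((Primrec.fst.comp (Primrec.unpair.comp hsk))).pair
      (Primrec.const c)).pair harg)
  have hbody := (Primrec.eq.comp hev (Primrec.const (some (encode true)))).decide
  exact (Primrec.ite hguard hbody (Primrec.const true)).to₂

theorem primrec_fcheck (j v : ℕ) : Primrec (fcheck j v) := by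
  have hguard : PrimrecPred fun l : List ℕ => Nat.pair 0 j < l.length :=
    Primrec.nat_lt.comp (Primrec.const _) Primrec.list_length
  have hbody : Primrec fun l : List ℕ => decide (pval l (Nat.pair 0 j) = v) :=
    (Primrec.eq.comp (primrec_pval.comp Primrec.id (Primrec.const _)) (Primrec.const v)).decide
  exact Primrec.ite hguard hbody (Primrec.const true)

theorem primrec_acheck (c₀ : Code) (a : Atom) :
    Primrec fun q : List ℕ × ℕ => acheck c₀ a q.1 q.2 := by
  cases a with
  | base => exact primrec_bcheck c₀
  | plant c a => exact primrec_pcheck c a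
  | fpfx j v => exact (primrec_fcheck j v).comp Primrec.fst

theorem primrec_allcheck (c₀ : Code) (L : List Atom) :
    Primrec fun q : List ℕ × ℕ => L.all fun a => acheck c₀ a q.1 q.2 := by
  induction L with
  | nil => exact (Primrec.const true).of_eq fun q => rfl
  | cons a L ih =>
      have : Primrec fun q : List ℕ × ℕ =>
          (acheck c₀ a q.1 q.2 && L.all fun a => acheck c₀ a q.1 q.2) :=
        (Primrec.cond (primrec_acheck c₀ a) ih (Primrec.const false)).of_eq fun q => by
          cases acheck c₀ a q.1 q.2 <;> simp
      exact this.of_eq fun q => by rw [List.all_cons]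

theorem primrec_tcheck (c : Code) :
    Primrec fun q : List ℕ × List ℕ × ℕ => tcheck c q.1 q.2.1 q.2.2 := by
  have hz1' : Primrec fun q : List ℕ × List ℕ × ℕ => q.2.2.unpair.1 :=
    Primrec.fst.comp (Primrec.unpair.comp (Primrec.snd.comp Primrec.snd))
  have hl : Primrec fun q : List ℕ × List ℕ × ℕ => q.2.1 := Primrec.fst.comp Primrec.snd
  have hlen' : Primrec fun q : List ℕ × List ℕ × ℕ => q.2.1.length :=
    Primrec.list_length.comp hl
  have hread : Primrec fun q : List ℕ × List ℕ × ℕ => Nat.pair 2 q.2.2.unpair.1 :=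
    Primrec₂.natPair.comp (Primrec.const 2) hz1'
  have hsk : Primrec fun q : List ℕ × List ℕ × ℕ => pval q.2.1 (Nat.pair 2 q.2.2.unpair.1) :=
    primrec_pval.comp hl hread
  have hKpos : Primrec fun q : List ℕ × List ℕ × ℕ =>
      Nat.pair 0 (Nat.pair 0 (pval q.2.1 (Nat.pair 2 q.2.2.unpair.1)).unpair.2) :=
    Primrec₂.natPair.comp (Primrec.const 0)
      (Primrec₂.natPair.comp (Primrec.const 0) (Primrec.snd.comp (Primrec.unpair.comp hsk)))
  have hguard : PrimrecPred fun q : List ℕ × List ℕ × ℕ =>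
      Nat.pair 2 q.2.2.unpair.1 < q.2.1.length ∧
      Nat.pair 0 (Nat.pair 0 (pval q.2.1 (Nat.pair 2 q.2.2.unpair.1)).unpair.2) ≤ q.2.1.length ∧
      q.2.2.unpair.1 ≤ q.1.length ∧ Nat.pair 1 q.2.2.unpair.1 ≤ q.2.1.length :=
    (Primrec.nat_lt.comp hread hlen').and
      ((Primrec.nat_le.comp hKpos hlen').and
        ((Primrec.nat_le.comp hz1' (Primrec.list_length.comp Primrec.fst)).and
          (Primrec.nat_le.comp (Primrec₂.natPair.comp (Primrec.const 1) hz1') hlen')))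
  have hinner : Primrec fun q : List ℕ × List ℕ × ℕ =>
      encode ((tk q.1 q.2.2.unpair.1, sub1 q.2.1 1 q.2.2.unpair.1, q.2.2.unpair.1) :
        List ℕ × List ℕ × ℕ) :=
    Primrec.encode.comp ((primrec_tk.comp Primrec.fst hz1').pair
      (((primrec_sub1 1).comp hl hz1').pair hz1'))
  have harg : Primrec fun q : List ℕ × List ℕ × ℕ =>
      encode ((sub2 q.2.1 0 (pval q.2.1 (Nat.pair 2 q.2.2.unpair.1)).unpair.2,
        encode ((tk q.1 q.2.2.unpair.1, sub1 q.2.1 1 q.2.2.unpair.1, q.2.2.unpair.1) :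
          List ℕ × List ℕ × ℕ)) : List ℕ × ℕ) :=
    Primrec.encode.comp (((primrec_sub2 0).comp hl
      (Primrec.snd.comp (Primrec.unpair.comp hsk))).pair hinner)
  have hev : Primrec fun q : List ℕ × List ℕ × ℕ =>
      evaln (pval q.2.1 (Nat.pair 2 q.2.2.unpair.1)).unpair.1 c
        (encode ((sub2 q.2.1 0 (pval q.2.1 (Nat.pair 2 q.2.2.unpair.1)).unpair.2,
          encode ((tk q.1 q.2.2.unpair.1, sub1 q.2.1 1 q.2.2.unpair.1, q.2.2.unpair.1) :
            List ℕ × List ℕ × ℕ)) : List ℕ × ℕ)) :=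
    primrec_evaln.comp (((Primrec.fst.comp (Primrec.unpair.comp hsk)).pair
      (Primrec.const c)).pair harg)
  have hbody := (Primrec.eq.comp hev (Primrec.const (some (encode true)))).decide
  exact Primrec.ite hguard hbody (Primrec.const true)

theorem primrec_mtop (c₀ : Code) (L : List Atom) (c : Code) :
    Primrec (MTop c₀ L c) := by
  have h1 : Primrec fun q : List ℕ × List ℕ × ℕ =>
      L.all fun a => acheck c₀ a q.2.1 q.2.2 :=
    (primrec_allcheck c₀ L).comp Primrec.snd
  have h2 := primrec_tcheck c
  exact (Primrec.cond h1 h2 (Primrec.const false)).of_eq fun q => by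
    rw [MTop]; cases L.all fun a => acheck c₀ a q.2.1 q.2.2 <;> simp

theorem aset_sigma11 (c₀ : Code) (L : List Atom) (c : Code) : IsSigma11 (ASet c₀ L c) :=
  ⟨MTop c₀ L c, (primrec_mtop c₀ L c).to_comp, aset_eq c₀ L c⟩



theorem initSeg_row_eq_of_agree {Wm W : ℕ → ℕ} {b i z : ℕ}
    (h : ∀ j < b, Wm j = W j) (hb : Nat.pair i z ≤ b) :
    initSeg (row Wm i) z = initSeg (row W i) z :=
  initSeg_eq_iff.2 fun t ht =>
    h _ (lt_of_lt_of_le (Nat.pair_lt_pair_right i ht) hb)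

theorem atomSat_limit {c₀ : Code} {a : Atom} {Wseq : ℕ → ℕ → ℕ} {W : ℕ → ℕ}
    (hconv : ∀ b, ∃ M, ∀ m ≥ M, ∀ j < b, Wseq m j = W j)
    (hsat : ∀ m₀, ∃ m ≥ m₀, AtomSat c₀ a (Wseq m)) : AtomSat c₀ a W := by
  cases a with
  | fpfx j v =>
      obtain ⟨M, hM⟩ := hconv (j + 1)
      obtain ⟨m, hm, hs⟩ := hsat M
      have := hM m hm j (Nat.lt_succ_self j)
      show W j = v
      rw [← this]
      exact hs
  | base =>
      intro z
      set b := Nat.pair 0 z + Nat.pair 1 z + Nat.pair 2 z + 1 with hb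
      obtain ⟨M, hM⟩ := hconv b
      obtain ⟨m, hm, hs⟩ := hsat M
      have hag := hM m hm
      have e0 : initSeg (row (Wseq m) 0) z = initSeg (row W 0) z :=
        initSeg_row_eq_of_agree hag (by omega)
      have e1 : initSeg (row (Wseq m) 1) z = initSeg (row W 1) z :=
        initSeg_row_eq_of_agree hag (by omega)
      have e2 : row (Wseq m) 2 z = row W 2 z := hag _ (by omega)
      have := hs z
      rw [e0, e1, e2] at this
      exact this
  | plant c a =>
      intro z
      set k := (W (Nat.pair (a + 2) z)).unpair.2 with hk
      set b := Nat.pair 0 k + Nat.pair a z + Nat.pair (a + 1) z + Nat.pair (a + 2) z + 1 with hb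
      obtain ⟨M, hM⟩ := hconv b
      obtain ⟨m, hm, hs⟩ := hsat M
      have hag := hM m hm
      have eH : row (Wseq m) (a + 2) z = row W (a + 2) z := hag _ (by omega)
      have e0 : initSeg (row (Wseq m) 0) k = initSeg (row W 0) k :=
        initSeg_row_eq_of_agree hag (by omega)
      have ea : initSeg (row (Wseq m) a) z = initSeg (row W a) z :=
        initSeg_row_eq_of_agree hag (by omega)
      have ea1 : initSeg (row (Wseq m) (a + 1)) z = initSeg (row W (a + 1)) z :=
        initSeg_row_eq_of_agree hag (by omega)
      have := hs z
      rw [eH] at this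
      have hkk : (row W (a + 2) z).unpair.2 = k := rfl
      rw [hkk] at this
      rw [e0, ea, ea1] at this
      exact this

structure St (c₀ : Code) where
  L : List Atom
  W : ℕ → ℕ
  r : ℕ
  hsat : SatL c₀ L W
  hsupp : ∀ a ∈ L, asupp a ≤ r

theorem step_ex (c₀ : Code) (C : Set (ℕ → ℕ))
    (hcl : ∀ Z ∉ C, ∃ m, ∀ V, initSeg V m = initSeg Z m → V ∉ C)
    (hC1 : ¬∃ E : Set (ℕ → ℕ), E.Nonempty ∧ E ⊆ C ∧ IsSigma11 E)
    (n : ℕ) (s : St c₀) (hrn : n + 2 ≤ s.r) (hr3 : 3 ≤ s.r) :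
    ∃ t : St c₀,
      t.r = s.r + 3 ∧
      (∀ a ∈ s.L, a ∈ t.L) ∧
      (∀ j < n + 1, Atom.fpfx j (t.W j) ∈ t.L) ∧
      ((ASet c₀ s.L (Denumerable.ofNat Code n) = ∅) ∨
        (∃ Z' m, Atom.plant (Denumerable.ofNat Code n) s.r ∈ t.L ∧
          (∀ k < m, Atom.fpfx (Nat.pair s.r k) (Z' k) ∈ t.L) ∧
          ∀ V, initSeg V m = initSeg Z' m → V ∉ C)) := by
  set c := Denumerable.ofNat Code n with hc
  by_cases hA : ASet c₀ s.L c = ∅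
  · refine ⟨⟨(List.range (n + 1)).map (fun j => Atom.fpfx j (s.W j)) ++ s.L, s.W, s.r + 3,
      ?_, ?_⟩, rfl, ?_, ?_, Or.inl hA⟩
    · intro a ha
      rcases List.mem_append.1 ha with ha | ha
      · obtain ⟨j, _, rfl⟩ := List.mem_map.1 ha
        rfl
      · exact s.hsat a ha
    · intro a ha
      rcases List.mem_append.1 ha with ha | ha
      · obtain ⟨j, hj, rfl⟩ := List.mem_map.1 ha
        have hj' : j < n + 1 := List.mem_range.1 hj
        have := Nat.unpair_left_le j
        simp only [asupp]
        omega
      · exact le_trans (s.hsupp a ha) (by omega)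
    · intro a ha
      exact List.mem_append.2 (Or.inr ha)
    · intro j hj
      exact List.mem_append.2 (Or.inl (List.mem_map.2 ⟨j, List.mem_range.2 hj, rfl⟩))
  · have hne : (ASet c₀ s.L c).Nonempty := Set.nonempty_iff_ne_empty.2 hA
    by_cases hsub : ASet c₀ s.L c ⊆ C
    · exact absurd ⟨_, hne, hsub, aset_sigma11 c₀ s.L c⟩ hC1
    · obtain ⟨Z, hZA, hZC⟩ := Set.not_subset.1 hsub
      obtain ⟨m, hm⟩ := hcl Z hZC
      obtain ⟨W, Y, H, hSW, hApx⟩ := hZA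
      set W' : ℕ → ℕ := fun j =>
        if (Nat.unpair j).1 = s.r then Z (Nat.unpair j).2
        else if (Nat.unpair j).1 = s.r + 1 then Y (Nat.unpair j).2
        else if (Nat.unpair j).1 = s.r + 2 then H (Nat.unpair j).2
        else W j with hW'
      have hlow : ∀ j, (Nat.unpair j).1 < s.r → W' j = W j := by
        intro j hj
        simp only [hW']
        rw [if_neg (by omega), if_neg (by omega), if_neg (by omega)]
      have hrowZ : row W' s.r = Z := funext fun t => by
        show W' (Nat.pair s.r t) = Z t
        have h1 : (Nat.pair s.r t).unpair.1 = s.r := by rw [Nat.unpair_pair]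
        simp only [hW']
        rw [if_pos h1, Nat.unpair_pair]
      have hrowY : row W' (s.r + 1) = Y := funext fun t => by
        show W' (Nat.pair (s.r + 1) t) = Y t
        have h1 : ¬(Nat.pair (s.r + 1) t).unpair.1 = s.r := by rw [Nat.unpair_pair]; omega
        have h2 : (Nat.pair (s.r + 1) t).unpair.1 = s.r + 1 := by rw [Nat.unpair_pair]
        simp only [hW']
        rw [if_neg h1, if_pos h2, Nat.unpair_pair]
      have hrowH : row W' (s.r + 2) = H := funext fun t => by
        show W' (Nat.pair (s.r + 2) t) = H t
        have h1 : ¬(Nat.pair (s.r + 2) t).unpair.1 = s.r := by rw [Nat.unpair_pair]; omega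
        have h2 : ¬(Nat.pair (s.r + 2) t).unpair.1 = s.r + 1 := by rw [Nat.unpair_pair]; omega
        have h3 : (Nat.pair (s.r + 2) t).unpair.1 = s.r + 2 := by rw [Nat.unpair_pair]
        simp only [hW']
        rw [if_neg h1, if_neg h2, if_pos h3, Nat.unpair_pair]
      have hrow0 : row W' 0 = row W 0 := funext fun t =>
        hlow _ (by rw [Nat.unpair_pair]; omega)
      set L' : List Atom :=
        (List.range (n + 1)).map (fun j => Atom.fpfx j (W' j)) ++
        ((List.range m).map (fun k => Atom.fpfx (Nat.pair s.r k) (Z k)) ++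
          (Atom.plant c s.r :: s.L)) with hL'
      have hsat' : SatL c₀ L' W' := by
        intro a ha
        rcases List.mem_append.1 ha with ha | ha
        · obtain ⟨j, _, rfl⟩ := List.mem_map.1 ha
          rfl
        rcases List.mem_append.1 ha with ha | ha
        · obtain ⟨k, _, rfl⟩ := List.mem_map.1 ha
          show W' (Nat.pair s.r k) = Z k
          rw [← hrowZ]; rfl
        rcases List.mem_cons.1 ha with rfl | ha
        · show ApxMem c (row W' 0) (row W' s.r) (row W' (s.r + 1)) (row W' (s.r + 2))
          rw [hrow0, hrowZ, hrowY, hrowH]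
          exact hApx
        · exact atomSat_ext (fun j hj => hlow j (lt_of_lt_of_le hj (s.hsupp a ha)))
            (hSW a ha)
      refine ⟨⟨L', W', s.r + 3, hsat', ?_⟩, rfl, ?_, ?_, Or.inr ⟨Z, m, ?_, ?_, hm⟩⟩
      · intro a ha
        rcases List.mem_append.1 ha with ha | ha
        · obtain ⟨j, hj, rfl⟩ := List.mem_map.1 ha
          have hj' : j < n + 1 := List.mem_range.1 hj
          have := Nat.unpair_left_le j
          simp only [asupp]; omega
        rcases List.mem_append.1 ha with ha | ha
        · obtain ⟨k, _, rfl⟩ := List.mem_map.1 ha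
          simp only [asupp, Nat.unpair_pair]; omega
        rcases List.mem_cons.1 ha with rfl | ha
        · simp only [asupp]; omega
        · exact le_trans (s.hsupp a ha) (by omega)
      · intro a ha
        exact List.mem_append.2 (Or.inr (List.mem_append.2 (Or.inr (List.mem_cons.2 (Or.inr ha)))))
      · intro j hj
        exact List.mem_append.2 (Or.inl (List.mem_map.2 ⟨j, List.mem_range.2 hj, rfl⟩))
      · exact List.mem_append.2 (Or.inr (List.mem_append.2 (Or.inr (List.mem_cons.2 (Or.inl rfl)))))
      · intro k hk
        exact List.mem_append.2 (Or.inr (List.mem_append.2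
          (Or.inl (List.mem_map.2 ⟨k, List.mem_range.2 hk, rfl⟩))))


/-- Σ¹₁-immunity basis theorem. For every compact `C ⊆ ω^ω` with no
non-empty `Σ¹₁` subset, and every non-empty `Σ¹₁` set `D ⊆ ω^ω`, there is some `X ∈ D`
such that `C` has no non-empty `Σ¹₁(X)` subset. -/
theorem sigma11_immunity_basis
    (C : Set (ℕ → ℕ)) (hC : IsCompact C)
    (hC1 : ¬∃ E : Set (ℕ → ℕ), E.Nonempty ∧ E ⊆ C ∧ IsSigma11 E)
    (D : Set (ℕ → ℕ)) (hD : IsSigma11 D) (hDne : D.Nonempty) :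
    ∃ X ∈ D, ¬∃ E : Set (ℕ → ℕ), E.Nonempty ∧ E ⊆ C ∧ IsSigma11In X E := by
  classical
  -- every point outside the closed set `C` has a cylinder neighbourhood disjoint from `C`
  have hcl : ∀ Z ∉ C, ∃ m, ∀ V : ℕ → ℕ, initSeg V m = initSeg Z m → V ∉ C := by
    intro Z hZ
    have hop : IsOpen Cᶜ := hC.isClosed.isOpen_compl
    have hmem : Cᶜ ∈ nhds Z := hop.mem_nhds hZ
    rw [nhds_pi, Filter.mem_pi] at hmem
    obtain ⟨I, hIfin, t, ht, hsub⟩ := hmem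
    obtain ⟨m, hm⟩ : ∃ m, ∀ i ∈ I, i < m := by
      rcases hIfin.bddAbove with ⟨b, hb⟩
      exact ⟨b + 1, fun i hi => Nat.lt_succ_of_le (hb hi)⟩
    refine ⟨m, fun V hV => ?_⟩
    have hVp : V ∈ I.pi t := by
      intro i hi
      have hVZ : V i = Z i := initSeg_eq_iff.1 hV i (hm i hi)
      rw [hVZ]
      exact mem_of_mem_nhds (ht i)
    exact hsub hVp
  -- data of the Σ¹₁ set D
  obtain ⟨R₀, hR₀, hDeq⟩ := hD
  obtain ⟨c₀, hc₀⟩ := computable_code hR₀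
  obtain ⟨X₀, hX₀⟩ := hDne
  rw [hDeq] at hX₀
  obtain ⟨Y₀, hXY⟩ := hX₀
  have hS : ∀ z, ∃ sN, evaln sN c₀
      (encode ((initSeg X₀ z, initSeg Y₀ z, z) : List ℕ × List ℕ × ℕ)) =
      some (encode true) := by
    intro z
    have hmem : encode true ∈ eval c₀
        (encode ((initSeg X₀ z, initSeg Y₀ z, z) : List ℕ × List ℕ × ℕ)) := by
      rw [hc₀ (initSeg X₀ z, initSeg Y₀ z, z), hXY z]
      exact Part.mem_some _
    obtain ⟨k, hk⟩ := evaln_complete.1 hmem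
    exact ⟨k, Option.mem_def.1 hk⟩
  choose S₀ hS₀ using hS
  -- initial condition
  have hsat0 : SatL c₀ [Atom.base] (tripleV X₀ Y₀ S₀) := by
    intro a ha
    rcases List.mem_cons.1 ha with rfl | h
    · intro z
      rw [row_tripleV₂, row_tripleV₀, row_tripleV₁]
      exact hS₀ z
    · cases h
  have hsupp0 : ∀ a ∈ [Atom.base], asupp a ≤ 3 := by
    intro a ha
    rcases List.mem_cons.1 ha with rfl | h
    · exact le_refl _
    · cases h
  let s0 : St c₀ := ⟨[Atom.base], tripleV X₀ Y₀ S₀, 3, hsat0, hsupp0⟩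
  -- the forcing iteration
  have hstep : ∀ (n : ℕ) (s : {s : St c₀ // s.r = 3 * n + 3}),
      ∃ t : {t : St c₀ // t.r = 3 * (n + 1) + 3},
        (∀ a ∈ s.val.L, a ∈ t.val.L) ∧
        (∀ j < n + 1, Atom.fpfx j (t.val.W j) ∈ t.val.L) ∧
        ((ASet c₀ s.val.L (Denumerable.ofNat Code n) = ∅) ∨
          (∃ Z' m, Atom.plant (Denumerable.ofNat Code n) s.val.r ∈ t.val.L ∧
            (∀ k < m, Atom.fpfx (Nat.pair s.val.r k) (Z' k) ∈ t.val.L) ∧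
            ∀ V, initSeg V m = initSeg Z' m → V ∉ C)) := by
    rintro n ⟨s, hs⟩
    obtain ⟨t, htr, h1, h2, h3⟩ := step_ex c₀ C hcl hC1 n s (by omega) (by omega)
    exact ⟨⟨t, by omega⟩, h1, h2, h3⟩
  choose G hG using hstep
  let F : ∀ n : ℕ, {s : St c₀ // s.r = 3 * n + 3} :=
    fun n => Nat.rec ⟨s0, by norm_num⟩ (fun n s => G n s) n
  have hF : ∀ n, (∀ a ∈ (F n).val.L, a ∈ (F (n + 1)).val.L) ∧
      (∀ j < n + 1, Atom.fpfx j ((F (n + 1)).val.W j) ∈ (F (n + 1)).val.L) ∧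
      ((ASet c₀ (F n).val.L (Denumerable.ofNat Code n) = ∅) ∨
        (∃ Z' m, Atom.plant (Denumerable.ofNat Code n) (F n).val.r ∈ (F (n + 1)).val.L ∧
          (∀ k < m, Atom.fpfx (Nat.pair (F n).val.r k) (Z' k) ∈ (F (n + 1)).val.L) ∧
          ∀ V, initSeg V m = initSeg Z' m → V ∉ C)) := fun n => hG n (F n)
  have chain : ∀ n m, n ≤ m → ∀ a ∈ (F n).val.L, a ∈ (F m).val.L := by
    intro n m hnm
    induction m, hnm using Nat.le_induction with
    | base => exact fun a ha => ha
    | succ m hm ih => exact fun a ha => (hF m).1 a (ih a ha)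
  -- the generic real
  set Wstar : ℕ → ℕ := fun j => (F (j + 1)).val.W j with hWstar
  have stab : ∀ j m, j + 1 ≤ m → (F m).val.W j = Wstar j := by
    intro j m hm
    have hfp : Atom.fpfx j ((F (j + 1)).val.W j) ∈ (F (j + 1)).val.L :=
      (hF j).2.1 j (Nat.lt_succ_self j)
    have hmem : Atom.fpfx j (Wstar j) ∈ (F m).val.L := chain (j + 1) m hm _ hfp
    exact (F m).val.hsat _ hmem
  have hconv : ∀ b, ∃ M, ∀ m ≥ M, ∀ j < b, (F m).val.W j = Wstar j :=
    fun b => ⟨b, fun m hm j hj => stab j m (by omega)⟩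
  have hSatStar : ∀ n, SatL c₀ (F n).val.L Wstar := by
    intro n a ha
    refine atomSat_limit (Wseq := fun m => (F m).val.W) hconv
      (fun m₀ => ⟨max n m₀, le_max_right _ _, ?_⟩)
    exact (F (max n m₀)).val.hsat a (chain n _ (le_max_left _ _) a ha)
  set Xstar : ℕ → ℕ := row Wstar 0 with hXstar
  -- Xstar ∈ D
  have hbase : AtomSat c₀ Atom.base Wstar :=
    hSatStar 0 Atom.base List.mem_cons_self
  have hXD : Xstar ∈ D := by
    rw [hDeq]
    refine ⟨row Wstar 1, fun z => ?_⟩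
    have h1 := hbase z
    have h2 : encode true ∈ eval c₀
        (encode ((initSeg (row Wstar 0) z, initSeg (row Wstar 1) z, z) :
          List ℕ × List ℕ × ℕ)) :=
      evaln_sound (Option.mem_def.2 h1)
    rw [hc₀ (initSeg (row Wstar 0) z, initSeg (row Wstar 1) z, z)] at h2
    have h3 := Part.mem_some_iff.1 h2
    exact (encode_inj.1 h3).symm
  refine ⟨Xstar, hXD, ?_⟩
  rintro ⟨E, hEne, hEC, R, hRcomp, hEdef⟩
  obtain ⟨c, htr⟩ := computableIn_tracks hRcomp
  have hcn : Denumerable.ofNat Code (encode c) = c := Denumerable.ofNat_encode c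
  rcases (hF (encode c)).2.2 with hempty | ⟨Z', m, hplant, hfp, hcyl⟩
  · obtain ⟨Z, hZ⟩ := hEne
    rw [hEdef] at hZ
    obtain ⟨Y, hY⟩ := hZ
    obtain ⟨H, hH⟩ := apx_complete htr hY
    have hmem : Z ∈ ASet c₀ (F (encode c)).val.L (Denumerable.ofNat Code (encode c)) := by
      rw [hcn]
      exact ⟨Wstar, Y, H, hSatStar (encode c), hH⟩
    rw [hempty] at hmem
    exact hmem
  · rw [hcn] at hplant
    have hsat := hSatStar (encode c + 1) _ hplant
    have happ : ApxMem c (row Wstar 0) (row Wstar (F (encode c)).val.r)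
        (row Wstar ((F (encode c)).val.r + 1)) (row Wstar ((F (encode c)).val.r + 2)) := hsat
    have hRtrue := apx_sound htr happ
    have hZE : row Wstar (F (encode c)).val.r ∈ E := by
      rw [hEdef]
      exact ⟨row Wstar ((F (encode c)).val.r + 1), hRtrue⟩
    have hZC : row Wstar (F (encode c)).val.r ∈ C := hEC hZE
    have hpre : initSeg (row Wstar (F (encode c)).val.r) m = initSeg Z' m :=
      initSeg_eq_iff.2 fun k hk =>
        hSatStar (encode c + 1) _ (hfp k hk)
    exact hcyl _ hpre hZC


end Paper
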